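/- Let U be a unitary N×N matrix and Q(ω) a quadratic matrix polynomial with invertible leading coefficient M, Q(ω) = ω²M − K + iωΓ, and let H = i[[0, I], [−M⁻¹K, −M⁻¹Γ]] be the linearized 2N×2N Hamiltonian. If U Q(ω*)* U⁻¹ = Q(ω) for all ω (as an identity of matrix polynomials, i.e., U M* U⁻¹ = M, U K* U⁻¹ = K, U Γ* U⁻¹ = Γ with appropriate conjugations), then (τ_z ⊗ U) H* (τ_z ⊗ U)⁻¹ = H, where τ_z ⊗ U = diag(U, −U). -/

import Mathlib

open Matrix Complex

/-- If the quadratic pencil Q(ω) = ω²M − K + iωΓ has the antiunitary symmetry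
U Q(ω*)* U⁻¹ = Q(ω) (U unitary), then the linearized Hamiltonian
H = i[[0, 1], [−M⁻¹K, −M⁻¹Γ]] satisfies (τ_z ⊗ U) H* (τ_z ⊗ U)⁻¹ = H. -/
theorem antiunitary_symmetry_linearization (N : ℕ)
    (M K Γ U : Matrix (Fin N) (Fin N) ℂ)
    (hM : IsUnit M.det)
    (hU : U ∈ unitary (Matrix (Fin N) (Fin N) ℂ))
    (hQ : ∀ ω : ℂ,
      U * (((starRingEnd ℂ ω) ^ 2 • M - K + (Complex.I * (starRingEnd ℂ ω)) • Γ).map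
            (starRingEnd ℂ)) * U⁻¹
        = ω ^ 2 • M - K + (Complex.I * ω) • Γ) :
    (Matrix.fromBlocks U 0 0 (-U))
        * ((Complex.I • Matrix.fromBlocks 0 1 (-(M⁻¹ * K)) (-(M⁻¹ * Γ))).map
            (starRingEnd ℂ))
        * (Matrix.fromBlocks U 0 0 (-U))⁻¹
      = Complex.I • Matrix.fromBlocks 0 1 (-(M⁻¹ * K)) (-(M⁻¹ * Γ)) := by
  set c := starRingEnd ℂ with hc
  -- U is invertible
  have hUdet : IsUnit U.det := by
    have h1 : star U * U = 1 := hU.1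
    have h2 := congrArg Matrix.det h1
    rw [Matrix.det_mul, Matrix.det_one] at h2
    exact IsUnit.of_mul_eq_one _ (mul_comm (star U).det U.det ▸ h2)
  -- expand the entrywise conjugation
  have hexp : ∀ ω : ℂ, ((c ω) ^ 2 • M - K + (Complex.I * c ω) • Γ).map c
      = ω ^ 2 • M.map c - K.map c - (Complex.I * ω) • Γ.map c := by
    intro ω
    rw [Matrix.map_add _ (map_add c), Matrix.map_sub _ (map_sub c),
        Matrix.map_smul' _ _ _ (map_mul c), Matrix.map_smul' _ _ _ (map_mul c)]
    have e1 : c ((c ω) ^ 2) = ω ^ 2 := by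
      simp [hc, map_pow]
    have e2 : c (Complex.I * c ω) = -(Complex.I * ω) := by
      simp [hc, Complex.conj_I]
    rw [e1, e2, neg_smul]
    abel
  have key : ∀ ω : ℂ,
      U * (ω ^ 2 • M.map c - K.map c - (Complex.I * ω) • Γ.map c)
        = (ω ^ 2 • M - K + (Complex.I * ω) • Γ) * U := by
    intro ω
    have h := hQ ω
    rw [hexp ω] at h
    have h' := congrArg (· * U) h
    rwa [Matrix.nonsing_inv_mul_cancel_right _ _ hUdet] at h'
  -- the three coefficient relations
  have hK : U * K.map c = K * U := by
    have h := key 0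
    have h2 : U * -(K.map c) = -(K * U) := by simpa using h
    rw [Matrix.mul_neg] at h2
    exact neg_injective h2
  have hΓ : U * Γ.map c = -(Γ * U) := by
    have h1 := key 1
    have h2 := key (-1)
    simp only [one_pow, one_smul, mul_one, neg_one_sq, mul_neg_one] at h1 h2
    have hd := congrArg₂ (· - ·) h2 h1
    rw [← Matrix.mul_sub, ← Matrix.sub_mul] at hd
    have e1 : M.map c - K.map c - (-Complex.I) • Γ.map c
        - (M.map c - K.map c - Complex.I • Γ.map c) = (2 * Complex.I) • Γ.map c := by
      module
    have e2 : (M - K + (-Complex.I) • Γ) - (M - K + Complex.I • Γ)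
        = (2 * Complex.I) • (-Γ) := by
      module
    rw [e1, e2] at hd
    rw [Matrix.mul_smul, Matrix.smul_mul] at hd
    have h2I : (2 * Complex.I : ℂ) ≠ 0 := by
      simp [Complex.I_ne_zero]
    have := smul_right_injective (Matrix (Fin N) (Fin N) ℂ) h2I hd
    rw [this, Matrix.neg_mul]
  have hM' : U * M.map c = M * U := by
    have h1 := key 1
    simp only [one_pow, one_smul, mul_one] at h1
    -- h1 : U * (M.map c - K.map c - I • Γ.map c) = (M - K + I • Γ) * U
    rw [Matrix.mul_sub, Matrix.mul_sub, Matrix.add_mul, Matrix.sub_mul,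
        Matrix.mul_smul, Matrix.smul_mul, hK, hΓ] at h1
    have h2 : U * M.map c - K * U + Complex.I • (Γ * U)
        = M * U - K * U + Complex.I • (Γ * U) := by
      rw [← h1]; module
    calc U * M.map c = U * M.map c - K * U + Complex.I • (Γ * U)
          - Complex.I • (Γ * U) + K * U := by module
      _ = M * U - K * U + Complex.I • (Γ * U) - Complex.I • (Γ * U) + K * U := by rw [h2]
      _ = M * U := by module
  -- the inverse relation
  have hMcdet : IsUnit ((M.map c).det) := by
    have hdet : c M.det = (M.map c).det := by
      rw [RingHom.map_det, RingHom.mapMatrix_apply]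
    exact hdet ▸ hM.map c
  have hMinvmap : (M⁻¹).map c = (M.map c)⁻¹ := by
    refine (Matrix.inv_eq_right_inv ?_).symm
    rw [← Matrix.map_mul, Matrix.mul_nonsing_inv M hM,
        Matrix.map_one c (map_zero c) (map_one c)]
  have hMinv : U * (M⁻¹).map c = M⁻¹ * U := by
    rw [hMinvmap]
    have h := congrArg (fun X => M⁻¹ * X * (M.map c)⁻¹) hM'
    rw [← Matrix.mul_assoc, ← Matrix.mul_assoc, Matrix.nonsing_inv_mul M hM, Matrix.one_mul,
        Matrix.mul_assoc (M⁻¹ * U), Matrix.mul_nonsing_inv _ hMcdet, Matrix.mul_one] at h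
    exact h.symm
  have hP : U * (M⁻¹ * K).map c = M⁻¹ * K * U := by
    rw [Matrix.map_mul, ← Matrix.mul_assoc, hMinv, Matrix.mul_assoc, hK, ← Matrix.mul_assoc]
  have hQg : U * (M⁻¹ * Γ).map c = -(M⁻¹ * Γ * U) := by
    rw [Matrix.map_mul, ← Matrix.mul_assoc, hMinv, Matrix.mul_assoc, hΓ, Matrix.mul_neg,
        ← Matrix.mul_assoc]
  -- assemble blocks
  set A : Matrix (Fin N ⊕ Fin N) (Fin N ⊕ Fin N) ℂ := Matrix.fromBlocks U 0 0 (-U) with hA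
  set B : Matrix (Fin N ⊕ Fin N) (Fin N ⊕ Fin N) ℂ :=
    Matrix.fromBlocks 0 1 (-(M⁻¹ * K)) (-(M⁻¹ * Γ)) with hB
  have hAdet : IsUnit A.det := by
    rw [hA, Matrix.det_fromBlocks_zero₂₁, Matrix.det_neg, Fintype.card_fin]
    exact (hUdet.mul ((isUnit_one.neg.pow N).mul hUdet))
  have map_neg' : ∀ X : Matrix (Fin N) (Fin N) ℂ, (-X).map c = -(X.map c) := by
    intro X; ext i j; simp [Matrix.map_apply]
  have hmapB : (Complex.I • B).map c
      = (-Complex.I) • Matrix.fromBlocks 0 1 (-((M⁻¹ * K).map c)) (-((M⁻¹ * Γ).map c)) := by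
    rw [Matrix.map_smul' c _ _ (map_mul c), hB, Matrix.fromBlocks_map, map_neg' _, map_neg' _,
        Matrix.map_zero c (map_zero c), Matrix.map_one c (map_zero c) (map_one c)]
    congr 1
    simp [hc, Complex.conj_I]
  have hcomm : A * ((Complex.I • B).map c) = (Complex.I • B) * A := by
    rw [hmapB, Matrix.mul_smul, Matrix.smul_mul, hA, hB, Matrix.fromBlocks_multiply,
        Matrix.fromBlocks_multiply]
    simp only [Matrix.mul_zero, Matrix.zero_mul, Matrix.mul_one, Matrix.one_mul,
      Matrix.mul_neg, Matrix.neg_mul, zero_add, add_zero, neg_neg, neg_zero]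
    rw [hP, hQg]
    rw [neg_smul, ← smul_neg]
    congr 1
    rw [Matrix.fromBlocks_neg]
    simp [Matrix.neg_mul]
  calc A * ((Complex.I • B).map c) * A⁻¹
      = (Complex.I • B) * A * A⁻¹ := by rw [hcomm]
    _ = (Complex.I • B) * (A * A⁻¹) := by rw [Matrix.mul_assoc]
    _ = Complex.I • B := by rw [Matrix.mul_nonsing_inv A hAdet, Matrix.mul_one]
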